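/- arXiv:1101.4293 — 3 statements merged into one kernel-verified Lean document; each statement's English description precedes it below -/
import Mathlib

section
/- The distance ratio function j_G(x,y) = log(1 + |x−y|/min{d(x,∂G), d(y,∂G)}) is a metric on any proper subdomain G ⊊ ℝⁿ. -/
private lemma key13 (a b c dx dy dz : ℝ) (ha : 0 ≤ a) (hb : 0 ≤ b) (hc : c ≤ a + b)
    (hdx : 0 < dx) (hdy : 0 < dy) (hdz : 0 < dz) (hxy : dx ≤ dy) (h1 : dz ≤ dx + a) :
    1 + c / min dx dy ≤ (1 + a / min dx dz) * (1 + b / min dz dy) := by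
  rw [min_eq_left hxy]
  rcases le_total dx dz with h | h
  · rw [min_eq_left h]
    set m := min dz dy with hm
    have hmpos : 0 < m := lt_min hdz hdy
    have hm2 : m ≤ dx + a := le_trans (min_le_left _ _) h1
    have e1 : 1 + c / dx = (dx + c) / dx := by field_simp
    have e2 : (1 + a / dx) * (1 + b / m) = ((dx + a) * (m + b)) / (dx * m) := by
      field_simp
    rw [e1, e2, div_le_div_iff₀ hdx (by positivity)]
    nlinarith [mul_le_mul_of_nonneg_left hm2 hb, mul_le_mul_of_nonneg_right hc hmpos.le,
      mul_pos hdx hmpos]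
  · rw [min_eq_left (h.trans hxy), min_eq_right h]
    have e1 : 1 + c / dx = (dx + c) / dx := by field_simp
    have e2 : (1 + a / dz) * (1 + b / dz) = ((dz + a) * (dz + b)) / (dz * dz) := by
      field_simp
    rw [e1, e2, div_le_div_iff₀ hdx (by positivity)]
    nlinarith [mul_le_mul_of_nonneg_right hc (mul_pos hdz hdz).le,
      mul_le_mul_of_nonneg_left h (mul_nonneg (add_nonneg ha hb) hdz.le),
      mul_nonneg (mul_nonneg ha hb) hdx.le]

private lemma tri13 (a b c dx dy dz : ℝ) (ha : 0 ≤ a) (hb : 0 ≤ b) (hc : c ≤ a + b)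
    (hdx : 0 < dx) (hdy : 0 < dy) (hdz : 0 < dz) (h1 : dz ≤ dx + a) (h2 : dz ≤ dy + b) :
    1 + c / min dx dy ≤ (1 + a / min dx dz) * (1 + b / min dz dy) := by
  rcases le_total dx dy with h | h
  · exact key13 a b c dx dy dz ha hb hc hdx hdy hdz h h1
  · have := key13 b a c dy dx dz hb ha (by linarith) hdy hdx hdz h h2
    rw [min_comm dy dx, min_comm dy dz, min_comm dz dx] at this
    linarith [this, mul_comm (1 + a / min dx dz) (1 + b / min dz dy)]

/-- The distance ratio function `j_G(x,y) = log(1 + |x−y|/min{d(x,∂G), d(y,∂G)})` is a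
metric on any proper subdomain `G ⊊ ℝⁿ`. -/
theorem stmt13 (n : ℕ) (G : Set (EuclideanSpace ℝ (Fin n)))
    (hopen : IsOpen G) (hconn : IsConnected G) (hproper : G ≠ Set.univ)
    (j : EuclideanSpace ℝ (Fin n) → EuclideanSpace ℝ (Fin n) → ℝ)
    (hj : ∀ x y, j x y = Real.log (1 + dist x y /
      min (Metric.infDist x (frontier G)) (Metric.infDist y (frontier G)))) :
    (∀ x ∈ G, ∀ y ∈ G, j x y = j y x) ∧
    (∀ x ∈ G, ∀ y ∈ G, 0 ≤ j x y ∧ (j x y = 0 ↔ x = y)) ∧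
    (∀ x ∈ G, ∀ y ∈ G, ∀ z ∈ G, j x y ≤ j x z + j z y) := by
  have hfne : (frontier G).Nonempty := by
    rw [Set.nonempty_iff_ne_empty]
    intro h
    rcases frontier_eq_empty_iff.mp h with h' | h'
    · exact hconn.nonempty.ne_empty h'
    · exact hproper h'
  have hdpos : ∀ x ∈ G, 0 < Metric.infDist x (frontier G) := by
    intro x hx
    refine (isClosed_frontier.notMem_iff_infDist_pos hfne).mp ?_
    rw [hopen.frontier_eq]
    exact fun h => h.2 hx
  refine ⟨?_, ?_, ?_⟩
  · intro x hx y hy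
    rw [hj, hj, dist_comm, min_comm]
  · intro x hx y hy
    have hmpos : 0 < min (Metric.infDist x (frontier G)) (Metric.infDist y (frontier G)) :=
      lt_min (hdpos x hx) (hdpos y hy)
    have harg : 1 ≤ 1 + dist x y /
        min (Metric.infDist x (frontier G)) (Metric.infDist y (frontier G)) := by
      have : 0 ≤ dist x y /
          min (Metric.infDist x (frontier G)) (Metric.infDist y (frontier G)) :=
        div_nonneg dist_nonneg hmpos.le
      linarith
    constructor
    · rw [hj]; exact Real.log_nonneg harg
    · rw [hj]
      constructor
      · intro h
        have h1 : 1 + dist x y /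
            min (Metric.infDist x (frontier G)) (Metric.infDist y (frontier G)) = 1 := by
          rcases Real.log_eq_zero.mp h with h' | h' | h' <;> linarith
        have h2 : dist x y /
            min (Metric.infDist x (frontier G)) (Metric.infDist y (frontier G)) = 0 := by
          linarith
        have h3 : dist x y = 0 := by
          rcases div_eq_zero_iff.mp h2 with h3 | h3
          · exact h3
          · exact absurd h3 hmpos.ne'
        exact dist_eq_zero.mp h3
      · intro h
        subst h
        simp
  · intro x hx y hy z hz
    set dx := Metric.infDist x (frontier G)
    set dy := Metric.infDist y (frontier G)
    set dz := Metric.infDist z (frontier G)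
    have hdx := hdpos x hx
    have hdy := hdpos y hy
    have hdz := hdpos z hz
    have h1 : dz ≤ dx + dist x z := by
      have := Metric.infDist_le_infDist_add_dist (x := z) (y := x) (s := frontier G)
      rw [dist_comm z x] at this
      linarith
    have h2 : dz ≤ dy + dist z y := by
      have := Metric.infDist_le_infDist_add_dist (x := z) (y := y) (s := frontier G)
      linarith [this, dist_comm z y]
    have hA : (1:ℝ) ≤ 1 + dist x y / min dx dy := by
      have : 0 ≤ dist x y / min dx dy := div_nonneg dist_nonneg (lt_min hdx hdy).le
      linarith
    have hB : (0:ℝ) < 1 + dist x z / min dx dz := by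
      have : 0 ≤ dist x z / min dx dz := div_nonneg dist_nonneg (lt_min hdx hdz).le
      linarith
    have hC : (0:ℝ) < 1 + dist z y / min dz dy := by
      have : 0 ≤ dist z y / min dz dy := div_nonneg dist_nonneg (lt_min hdz hdy).le
      linarith
    have hkey := tri13 (dist x z) (dist z y) (dist x y) dx dy dz dist_nonneg dist_nonneg
      (dist_triangle x z y) hdx hdy hdz h1 h2
    rw [hj, hj, hj, ← Real.log_mul hB.ne' hC.ne']
    exact Real.log_le_log (by linarith) hkey
end

section
/- For any domain G ⊊ ℝⁿ and x, y ∈ G, the quasihyperbolic distance satisfies k_G(x,y) ≥ log(1 + L/min{δ(x),δ(y)}) ≥ j_G(x,y), where L is the infimum of Euclidean lengths of curves joining x to y in G and δ(z) = dist(z, ∂G). -/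
open Set

/-- Smooth paths in `G` joining `x` to `y`. -/
def PathsIn {n : ℕ} (G : Set (EuclideanSpace ℝ (Fin n)))
    (x y : EuclideanSpace ℝ (Fin n)) :=
  {γ : ℝ → EuclideanSpace ℝ (Fin n) //
    γ 0 = x ∧ γ 1 = y ∧ ContDiffOn ℝ 1 γ (Icc 0 1) ∧ ∀ t ∈ Icc (0 : ℝ) 1, γ t ∈ G}

/-- The quasihyperbolic distance in `G`: the infimum of `∫ |γ'(t)|/δ(γ(t)) dt`, where
`δ(z) = dist(z, ∂G)`, over paths in `G` joining `x` to `y`. -/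
noncomputable def quasiHypDist {n : ℕ} (G : Set (EuclideanSpace ℝ (Fin n)))
    (x y : EuclideanSpace ℝ (Fin n)) : ℝ :=
  ⨅ γ : PathsIn G x y,
    ∫ t in (0 : ℝ)..1, ‖deriv γ.1 t‖ / Metric.infDist (γ.1 t) (frontier G)

/-- The infimum of Euclidean lengths of curves joining `x` to `y` in `G`. -/
noncomputable def infLength {n : ℕ} (G : Set (EuclideanSpace ℝ (Fin n)))
    (x y : EuclideanSpace ℝ (Fin n)) : ℝ :=
  ⨅ γ : PathsIn G x y, ∫ t in (0 : ℝ)..1, ‖deriv γ.1 t‖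


open MeasureTheory intervalIntegral
set_option linter.unusedSectionVars false

namespace QHAux

noncomputable def ψ (t : ℝ) : ℝ := Real.smoothTransition (3 * t - 1)

lemma ψ_contDiff : ContDiff ℝ 1 ψ :=
  Real.smoothTransition.contDiff.comp ((contDiff_const.mul contDiff_id).sub contDiff_const)

lemma ψ_mem (t : ℝ) : ψ t ∈ Icc (0:ℝ) 1 :=
  ⟨Real.smoothTransition.nonneg _, Real.smoothTransition.le_one _⟩

lemma ψ_zero {t : ℝ} (h : t ≤ 1/3) : ψ t = 0 :=
  Real.smoothTransition.zero_of_nonpos (by linarith)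

lemma ψ_one {t : ℝ} (h : 2/3 ≤ t) : ψ t = 1 :=
  Real.smoothTransition.one_of_one_le (by linarith)

variable {n : ℕ} {G : Set (EuclideanSpace ℝ (Fin n))} {a b c : EuclideanSpace ℝ (Fin n)}

noncomputable def conc (p q : ℝ → EuclideanSpace ℝ (Fin n)) (t : ℝ) :
    EuclideanSpace ℝ (Fin n) :=
  if t ≤ 1/2 then p (ψ (2*t)) else q (ψ (2*t - 1))

noncomputable def concatP (P : PathsIn G a b) (Q : PathsIn G b c) : PathsIn G a c := by
  obtain ⟨p, hp0, hp1, hpd, hpG⟩ := P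
  obtain ⟨q, hq0, hq1, hqd, hqG⟩ := Q
  refine ⟨conc p q, ?_, ?_, ?_, ?_⟩
  · rw [conc, if_pos (by norm_num : (0:ℝ) ≤ 1/2), show (2:ℝ)*0 = 0 by norm_num,
      ψ_zero (by norm_num), hp0]
  · rw [conc, if_neg (by norm_num), ψ_one (by norm_num), hq1]
  · -- ContDiffOn via ContDiffAt everywhere
    have hP : ContDiff ℝ 1 (fun s => p (ψ (2*s))) := by
      rw [← contDiffOn_univ]
      exact hpd.comp ((ψ_contDiff.comp (contDiff_const.mul contDiff_id)).contDiffOn)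
        (fun s _ => ψ_mem _)
    have hQ : ContDiff ℝ 1 (fun s => q (ψ (2*s - 1))) := by
      rw [← contDiffOn_univ]
      exact hqd.comp ((ψ_contDiff.comp ((contDiff_const.mul contDiff_id).sub
        contDiff_const)).contDiffOn) (fun s _ => ψ_mem _)
    intro t _
    have : ContDiffAt ℝ 1 (conc p q) t := by
      rcases lt_trichotomy t (1/2) with h | h | h
      · refine (hP.contDiffAt).congr_of_eventuallyEq ?_
        filter_upwards [Iio_mem_nhds h] with s hs
        simp only [conc, if_pos (mem_Iio.1 hs).le]
      · refine (contDiffAt_const (c := b)).congr_of_eventuallyEq ?_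
        have hmem : Ioo (1/3 : ℝ) (2/3) ∈ nhds t := by
          refine Ioo_mem_nhds ?_ ?_ <;> rw [h] <;> norm_num
        filter_upwards [hmem] with s hs
        rcases le_or_gt s (1/2) with h2 | h2
        · rw [conc, if_pos h2, ψ_one (by linarith [hs.1]), hp1]
        · rw [conc, if_neg (not_le.2 h2), ψ_zero (by linarith [hs.2]), hq0]
      · refine (hQ.contDiffAt).congr_of_eventuallyEq ?_
        filter_upwards [Ioi_mem_nhds h] with s hs
        simp only [conc, if_neg (not_le.2 (mem_Ioi.1 hs))]
    exact this.contDiffWithinAt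
  · intro t _
    rw [conc]
    split
    · exact hpG _ (ψ_mem _)
    · exact hqG _ (ψ_mem _)

/-- straight segment, assuming it lies in G -/
noncomputable def seg (z w : EuclideanSpace ℝ (Fin n))
    (h : ∀ t ∈ Icc (0:ℝ) 1, z + t • (w - z) ∈ G) : PathsIn G z w := by
  refine ⟨fun t => z + t • (w - z), by simp, by simp, ?_, h⟩
  exact (contDiffOn_const.add ((contDiffOn_id).smul contDiffOn_const))

lemma nonempty_pathsIn (hopen : IsOpen G) (hconn : IsPreconnected G)
    {x y : EuclideanSpace ℝ (Fin n)} (hx : x ∈ G) (hy : y ∈ G) :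
    Nonempty (PathsIn G x y) := by
  set S : Set (EuclideanSpace ℝ (Fin n)) := {b | b ∈ G ∧ Nonempty (PathsIn G x b)} with hS
  have hsub : S ⊆ G := fun b hb => hb.1
  have hball : ∀ b ∈ G, ∃ r > 0, Metric.ball b r ⊆ G := fun b hb =>
    Metric.isOpen_iff.1 hopen b hb
  have hstep : ∀ b ∈ G, ∀ r > 0, Metric.ball b r ⊆ G → ∀ w ∈ Metric.ball b r,
      Nonempty (PathsIn G b w) := by
    intro b hb r hr hball w hw
    refine ⟨seg b w fun t ht => hball ?_⟩
    exact (convex_ball b r).add_smul_sub_mem (Metric.mem_ball_self hr) hw ht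
  have hSopen : IsOpen S := by
    rw [Metric.isOpen_iff]
    rintro b ⟨hbG, ⟨P⟩⟩
    obtain ⟨r, hr, hball'⟩ := hball b hbG
    refine ⟨r, hr, fun w hw => ⟨hball' hw, ?_⟩⟩
    obtain ⟨Q⟩ := hstep b hbG r hr hball' w hw
    exact ⟨concatP P Q⟩
  have hCopen : IsOpen (G \ S) := by
    rw [Metric.isOpen_iff]
    rintro b ⟨hbG, hbS⟩
    obtain ⟨r, hr, hball'⟩ := hball b hbG
    refine ⟨r, hr, fun w hw => ⟨hball' hw, fun hwS => hbS ⟨hbG, ?_⟩⟩⟩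
    obtain ⟨P⟩ := hwS.2
    have hwb : b ∈ Metric.ball w r := by rwa [Metric.mem_ball, dist_comm] at hw
    -- segment from w to b inside ball b r (convex, contains both)
    have : Nonempty (PathsIn G w b) := by
      refine ⟨seg w b fun t ht => hball' ?_⟩
      exact (convex_ball b r).add_smul_sub_mem hw (Metric.mem_ball_self hr) ht
    obtain ⟨Q⟩ := this
    exact ⟨concatP P Q⟩
  by_contra hne
  have hyC : y ∈ G \ S := ⟨hy, fun h => hne h.2⟩
  have hxS : x ∈ S := ⟨hx, ⟨⟨fun _ => x, rfl, rfl, contDiffOn_const, fun _ _ => hx⟩⟩⟩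
  obtain ⟨z, hzG, hzS, hzC⟩ := hconn S (G \ S) hSopen hCopen
    (fun b hb => by by_cases h : b ∈ S; exacts [Or.inl h, Or.inr ⟨hb, h⟩])
    ⟨x, hx, hxS⟩ ⟨y, hy, hyC⟩
  exact hzC.2 hzS

end QHAux

namespace QHAux

variable {n : ℕ} {G : Set (EuclideanSpace ℝ (Fin n))} {x y : EuclideanSpace ℝ (Fin n)}

lemma ae_mem_Ioo : ∀ᵐ t : ℝ, t ∈ Set.uIoc (0:ℝ) 1 → t ∈ Ioo (0:ℝ) 1 := by
  have h : (volume : Measure ℝ) {(1:ℝ)} = 0 := measure_singleton 1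
  filter_upwards [compl_mem_ae_iff.2 h] with t ht hmem
  rw [uIoc_of_le zero_le_one] at hmem
  exact ⟨hmem.1, lt_of_le_of_ne hmem.2 ht⟩

section path
variable (p : ℝ → EuclideanSpace ℝ (Fin n)) (hpd : ContDiffOn ℝ 1 p (Icc 0 1))
include hpd

lemma f_cont : ContinuousOn (derivWithin p (Icc 0 1)) (Icc 0 1) :=
  hpd.continuousOn_derivWithin (uniqueDiffOn_Icc zero_lt_one) le_rfl

lemma hasDerivAt_interior {t : ℝ} (ht : t ∈ Ioo (0:ℝ) 1) :
    HasDerivAt p (derivWithin p (Icc 0 1) t) t := by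
  have hmem : Icc (0:ℝ) 1 ∈ nhds t := Icc_mem_nhds ht.1 ht.2
  have hd := (hpd.differentiableOn one_ne_zero t (Ioo_subset_Icc_self ht)).differentiableAt hmem
  rw [derivWithin_of_mem_nhds hmem]
  exact hd.hasDerivAt

lemma deriv_eq_interior {t : ℝ} (ht : t ∈ Ioo (0:ℝ) 1) :
    deriv p t = derivWithin p (Icc 0 1) t :=
  ((hasDerivAt_interior p hpd ht).deriv).symm ▸ rfl

/-- the globally continuous extension of `‖derivWithin p (Icc 0 1)‖`. -/
noncomputable def F (t : ℝ) : ℝ := ‖derivWithin p (Icc 0 1) (max 0 (min 1 t))‖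

lemma F_cont : Continuous (F p) := by
  have hproj : Continuous fun t : ℝ => max 0 (min 1 t) :=
    continuous_const.max (continuous_const.min continuous_id)
  have hmem : ∀ t : ℝ, max 0 (min 1 t) ∈ Icc (0:ℝ) 1 := fun t =>
    ⟨le_max_left _ _, max_le zero_le_one (min_le_left _ _)⟩
  exact ((f_cont p hpd).comp_continuous hproj hmem).norm

lemma F_eq {t : ℝ} (ht : t ∈ Icc (0:ℝ) 1) : F p t = ‖derivWithin p (Icc 0 1) t‖ := by
  rw [F, max_eq_right (by rw [min_eq_right ht.2]; exact ht.1), min_eq_right ht.2]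

lemma F_nonneg (t : ℝ) : 0 ≤ F p t := norm_nonneg _

end path
end QHAux

namespace QHAux
variable {n : ℕ} {G : Set (EuclideanSpace ℝ (Fin n))} {x y : EuclideanSpace ℝ (Fin n)}

lemma dd_pos (hGo : IsOpen G) (hfr : (frontier G).Nonempty) {z : EuclideanSpace ℝ (Fin n)}
    (hz : z ∈ G) : 0 < Metric.infDist z (frontier G) :=
  (isClosed_frontier.notMem_iff_infDist_pos hfr).1 fun hz' => (hGo.frontier_eq ▸ hz').2 hz

lemma key_est (hGo : IsOpen G) (hfr : (frontier G).Nonempty)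
    (p : ℝ → EuclideanSpace ℝ (Fin n)) (h0 : p 0 = x) (h1 : p 1 = y)
    (hpd : ContDiffOn ℝ 1 p (Icc 0 1)) (hpG : ∀ t ∈ Icc (0:ℝ) 1, p t ∈ G) :
    Real.log (1 + (∫ t in (0:ℝ)..1, ‖deriv p t‖) / Metric.infDist x (frontier G))
      ≤ (∫ t in (0:ℝ)..1, ‖deriv p t‖ / Metric.infDist (p t) (frontier G))
    ∧ dist x y ≤ ∫ t in (0:ℝ)..1, ‖deriv p t‖ := by
  set δ : EuclideanSpace ℝ (Fin n) → ℝ := fun z => Metric.infDist z (frontier G) with hδdef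
  set g : ℝ → ℝ := fun t => ∫ s in (0:ℝ)..t, F p s with hgdef
  have hFc : Continuous (F p) := F_cont p hpd
  have hFi : ∀ a b : ℝ, IntervalIntegrable (F p) volume a b := fun a b =>
    hFc.intervalIntegrable a b
  have hgd : ∀ t : ℝ, HasDerivAt g (F p t) t := fun t =>
    integral_hasDerivAt_right (hFi 0 t)
      (hFc.aestronglyMeasurable.stronglyMeasurableAtFilter) hFc.continuousAt
  have hgc : Continuous g := continuous_iff_continuousAt.2 fun t => (hgd t).continuousAt
  have hg0 : g 0 = 0 := integral_same
  have hgnn : ∀ t ∈ Icc (0:ℝ) 1, 0 ≤ g t := fun t ht =>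
    intervalIntegral.integral_nonneg ht.1 fun u _ => F_nonneg p hpd u
  have hδx : 0 < δ x := dd_pos hGo hfr (h0 ▸ hpG 0 ⟨le_rfl, zero_le_one⟩)
  have hδpos : ∀ t ∈ Icc (0:ℝ) 1, 0 < δ (p t) := fun t ht => dd_pos hGo hfr (hpG t ht)
  have hpos : ∀ t ∈ Icc (0:ℝ) 1, 0 < δ x + g t := fun t ht =>
    add_pos_of_pos_of_nonneg hδx (hgnn t ht)
  -- FTC for p
  have hFTC : ∀ t ∈ Icc (0:ℝ) 1,
      (∫ s in (0:ℝ)..t, derivWithin p (Icc 0 1) s) = p t - p 0 := by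
    intro t ht
    apply integral_eq_sub_of_hasDeriv_right_of_le ht.1
      (hpd.continuousOn.mono (Icc_subset_Icc le_rfl ht.2))
      (fun s hs => (hasDerivAt_interior p hpd ⟨hs.1, hs.2.trans_le ht.2⟩).hasDerivWithinAt)
    exact ((f_cont p hpd).mono (by
      rw [uIcc_of_le ht.1]; exact Icc_subset_Icc le_rfl ht.2)).intervalIntegrable
  have hnorm : ∀ t ∈ Icc (0:ℝ) 1, ‖p t - x‖ ≤ g t := by
    intro t ht
    rw [← h0, ← hFTC t ht]
    calc ‖∫ s in (0:ℝ)..t, derivWithin p (Icc 0 1) s‖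
        ≤ ∫ s in (0:ℝ)..t, ‖derivWithin p (Icc 0 1) s‖ := norm_integral_le_integral_norm ht.1
      _ = g t := by
          refine integral_congr fun s hs => ?_
          rw [uIcc_of_le ht.1] at hs
          exact (F_eq p hpd ⟨hs.1, hs.2.trans ht.2⟩).symm
  have hδle : ∀ t ∈ Icc (0:ℝ) 1, δ (p t) ≤ δ x + g t := by
    intro t ht
    calc δ (p t) ≤ δ x + dist (p t) x := Metric.infDist_le_infDist_add_dist
      _ ≤ δ x + g t := add_le_add le_rfl (by rw [dist_eq_norm]; exact hnorm t ht)
  -- integrabilities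
  have hδpc : ContinuousOn (fun t => δ (p t)) (Icc (0:ℝ) 1) :=
    (Metric.continuous_infDist_pt (frontier G)).comp_continuousOn hpd.continuousOn
  have hint2 : IntervalIntegrable (fun t => F p t / δ (p t)) volume 0 1 := by
    apply ContinuousOn.intervalIntegrable
    rw [uIcc_of_le zero_le_one]
    exact hFc.continuousOn.div hδpc fun t ht => (hδpos t ht).ne'
  have hint1 : IntervalIntegrable (fun t => F p t / (δ x + g t)) volume 0 1 := by
    apply ContinuousOn.intervalIntegrable
    rw [uIcc_of_le zero_le_one]
    exact hFc.continuousOn.div (continuousOn_const.add hgc.continuousOn)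
      fun t ht => (hpos t ht).ne'
  -- step 1 : rewrite the quasihyperbolic integrand a.e.
  have step1 : (∫ t in (0:ℝ)..1, ‖deriv p t‖ / δ (p t))
      = ∫ t in (0:ℝ)..1, F p t / δ (p t) := by
    refine integral_congr_ae ?_
    filter_upwards [ae_mem_Ioo] with t h hmem
    rw [deriv_eq_interior p hpd (h hmem), ← F_eq p hpd (Ioo_subset_Icc_self (h hmem))]
  have step4 : g 1 = ∫ t in (0:ℝ)..1, ‖deriv p t‖ := by
    refine integral_congr_ae ?_
    filter_upwards [ae_mem_Ioo] with t h hmem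
    rw [deriv_eq_interior p hpd (h hmem), ← F_eq p hpd (Ioo_subset_Icc_self (h hmem))]
  have step2 : (∫ t in (0:ℝ)..1, F p t / (δ x + g t))
      ≤ ∫ t in (0:ℝ)..1, F p t / δ (p t) := by
    refine integral_mono_on zero_le_one hint1 hint2 fun t ht => ?_
    exact div_le_div_of_nonneg_left (F_nonneg p hpd t) (hδpos t ht) (hδle t ht)
  have step3 : (∫ t in (0:ℝ)..1, F p t / (δ x + g t))
      = Real.log (δ x + g 1) - Real.log (δ x + g 0) := by
    refine integral_eq_sub_of_hasDeriv_right_of_le zero_le_one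
      ((continuousOn_const.add hgc.continuousOn).log fun t ht => (hpos t ht).ne')
      (fun t ht => ?_) hint1
    have h1 : HasDerivAt (fun u => δ x + g u) (0 + F p t) t :=
      (hasDerivAt_const t (δ x)).add (hgd t)
    have h2 := h1.log (hpos t (Ioo_subset_Icc_self ht)).ne'
    simpa using h2.hasDerivWithinAt
  constructor
  · rw [step1, ← step4]
    calc Real.log (1 + g 1 / δ x) = Real.log ((δ x + g 1) / δ x) := by
          rw [add_div, div_self hδx.ne']
      _ = Real.log (δ x + g 1) - Real.log (δ x) := Real.log_div
          (hpos 1 (right_mem_Icc.2 zero_le_one)).ne' hδx.ne'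
      _ = ∫ t in (0:ℝ)..1, F p t / (δ x + g t) := by rw [step3, hg0, add_zero]
      _ ≤ _ := step2
  · rw [← step4]
    have := hnorm 1 (right_mem_Icc.2 zero_le_one)
    rw [h1] at this
    rwa [dist_comm, dist_eq_norm]

end QHAux

namespace QHAux
variable {n : ℕ} {G : Set (EuclideanSpace ℝ (Fin n))}

lemma rev_path (p : ℝ → EuclideanSpace ℝ (Fin n)) (hpd : ContDiffOn ℝ 1 p (Icc 0 1)) :
    ContDiffOn ℝ 1 (fun t => p (1 - t)) (Icc 0 1)
    ∧ (∫ t in (0:ℝ)..1, ‖deriv (fun s => p (1 - s)) t‖ /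
        Metric.infDist (p (1 - t)) (frontier G))
      = (∫ t in (0:ℝ)..1, ‖deriv p t‖ / Metric.infDist (p t) (frontier G))
    ∧ (∫ t in (0:ℝ)..1, ‖deriv (fun s => p (1 - s)) t‖) = ∫ t in (0:ℝ)..1, ‖deriv p t‖ := by
  have hmaps : ∀ t ∈ Icc (0:ℝ) 1, (1:ℝ) - t ∈ Icc (0:ℝ) 1 := fun t ht =>
    ⟨by linarith [ht.2], by linarith [ht.1]⟩
  have hcd : ContDiffOn ℝ 1 (fun t => p (1 - t)) (Icc 0 1) :=
    hpd.comp ((contDiff_const.sub contDiff_id).contDiffOn) hmaps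
  have hder : ∀ t ∈ Ioo (0:ℝ) 1,
      deriv (fun s => p (1 - s)) t = (-1 : ℝ) • derivWithin p (Icc 0 1) (1 - t) := by
    intro t ht
    have h1t : (1:ℝ) - t ∈ Ioo (0:ℝ) 1 := ⟨by linarith [ht.2], by linarith [ht.1]⟩
    have hf : HasDerivAt (fun s : ℝ => 1 - s) (-1) t := by
      simpa using (hasDerivAt_id t).const_sub 1
    have := HasDerivAt.scomp (x := t) (h := fun s : ℝ => (1:ℝ) - s)
      (hasDerivAt_interior p hpd h1t) hf
    exact this.deriv
  refine ⟨hcd, ?_, ?_⟩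
  · have e1 : (∫ t in (0:ℝ)..1, ‖deriv (fun s => p (1 - s)) t‖ /
        Metric.infDist (p (1 - t)) (frontier G))
        = ∫ t in (0:ℝ)..1,
          (fun s => ‖derivWithin p (Icc 0 1) s‖ / Metric.infDist (p s) (frontier G)) (1 - t) := by
      refine integral_congr_ae ?_
      filter_upwards [ae_mem_Ioo] with t h hmem
      rw [hder t (h hmem)]
      simp [norm_smul]
    have e2 : (∫ t in (0:ℝ)..1, ‖deriv p t‖ / Metric.infDist (p t) (frontier G))
        = ∫ t in (0:ℝ)..1, ‖derivWithin p (Icc 0 1) t‖ / Metric.infDist (p t) (frontier G) := by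
      refine integral_congr_ae ?_
      filter_upwards [ae_mem_Ioo] with t h hmem
      rw [deriv_eq_interior p hpd (h hmem)]
    rw [e1, e2, integral_comp_sub_left
      (fun s => ‖derivWithin p (Icc 0 1) s‖ / Metric.infDist (p s) (frontier G)) 1]
    norm_num
  · have e1 : (∫ t in (0:ℝ)..1, ‖deriv (fun s => p (1 - s)) t‖)
        = ∫ t in (0:ℝ)..1, (fun s => ‖derivWithin p (Icc 0 1) s‖) (1 - t) := by
      refine integral_congr_ae ?_
      filter_upwards [ae_mem_Ioo] with t h hmem
      rw [hder t (h hmem)]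
      simp [norm_smul]
    have e2 : (∫ t in (0:ℝ)..1, ‖deriv p t‖)
        = ∫ t in (0:ℝ)..1, ‖derivWithin p (Icc 0 1) t‖ := by
      refine integral_congr_ae ?_
      filter_upwards [ae_mem_Ioo] with t h hmem
      rw [deriv_eq_interior p hpd (h hmem)]
    rw [e1, e2, integral_comp_sub_left (fun s => ‖derivWithin p (Icc 0 1) s‖) 1]
    norm_num

end QHAux

/-- For any domain `G ⊊ ℝⁿ` and `x, y ∈ G`,
`k_G(x,y) ≥ log(1 + L/min{δ(x),δ(y)}) ≥ j_G(x,y)` where `L` is the infimal Euclidean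
length of curves joining `x` and `y` in `G` and `δ(z) = dist(z, ∂G)`. -/
theorem stmt14 (n : ℕ) (G : Set (EuclideanSpace ℝ (Fin n)))
    (hopen : IsOpen G) (hconn : IsConnected G) (hproper : G ≠ Set.univ)
    (x y : EuclideanSpace ℝ (Fin n)) (hx : x ∈ G) (hy : y ∈ G) :
    quasiHypDist G x y ≥
      Real.log (1 + infLength G x y /
        min (Metric.infDist x (frontier G)) (Metric.infDist y (frontier G))) ∧
    Real.log (1 + infLength G x y /
        min (Metric.infDist x (frontier G)) (Metric.infDist y (frontier G))) ≥
      Real.log (1 + dist x y /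
        min (Metric.infDist x (frontier G)) (Metric.infDist y (frontier G))) := by
  haveI : PreconnectedSpace (EuclideanSpace ℝ (Fin n)) := inferInstance
  haveI hne : Nonempty (PathsIn G x y) :=
    QHAux.nonempty_pathsIn hopen hconn.isPreconnected hx hy
  have hfr : (frontier G).Nonempty := nonempty_frontier_iff.2 ⟨⟨x, hx⟩, hproper⟩
  set δx := Metric.infDist x (frontier G) with hδxdef
  set δy := Metric.infDist y (frontier G) with hδydef
  have hδx : 0 < δx := QHAux.dd_pos hopen hfr hx
  have hδy : 0 < δy := QHAux.dd_pos hopen hfr hy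
  have hmpos : 0 < min δx δy := lt_min hδx hδy
  have hdist : ∀ γ : PathsIn G x y, dist x y ≤ ∫ t in (0:ℝ)..1, ‖deriv γ.1 t‖ := by
    rintro ⟨p, h0, h1, hd, hG⟩
    exact (QHAux.key_est hopen hfr p h0 h1 hd hG).2
  have hBdd : BddBelow (Set.range fun γ : PathsIn G x y =>
      ∫ t in (0:ℝ)..1, ‖deriv γ.1 t‖) := by
    refine ⟨dist x y, ?_⟩
    rintro r ⟨γ, rfl⟩
    exact hdist γ
  have hLdist : dist x y ≤ infLength G x y := le_ciInf hdist
  have hL0 : 0 ≤ infLength G x y := dist_nonneg.trans hLdist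
  have hL : ∀ γ : PathsIn G x y, infLength G x y ≤ ∫ t in (0:ℝ)..1, ‖deriv γ.1 t‖ :=
    fun γ => ciInf_le hBdd γ
  constructor
  · rw [ge_iff_le, quasiHypDist]
    refine le_ciInf ?_
    rintro ⟨p, h0, h1, hd, hG⟩
    have k1 := (QHAux.key_est hopen hfr p h0 h1 hd hG).1
    obtain ⟨hcd, e1, e2⟩ := QHAux.rev_path (G := G) p hd
    have h0' : (fun t => p (1 - t)) 0 = y := by simpa using h1
    have h1' : (fun t => p (1 - t)) 1 = x := by simpa using h0
    have hG' : ∀ t ∈ Icc (0:ℝ) 1, (fun t => p (1 - t)) t ∈ G := fun t ht =>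
      hG _ ⟨by linarith [ht.2], by linarith [ht.1]⟩
    have k2 := (QHAux.key_est hopen hfr (fun t => p (1 - t)) h0' h1' hcd hG').1
    rw [e1, e2] at k2
    have hLp : infLength G x y ≤ ∫ t in (0:ℝ)..1, ‖deriv p t‖ := hL ⟨p, h0, h1, hd, hG⟩
    rcases le_total δx δy with hxy | hxy
    · rw [min_eq_left hxy]
      refine le_trans (Real.log_le_log ?_ ?_) k1
      · exact add_pos_of_pos_of_nonneg one_pos (div_nonneg hL0 hδx.le)
      · gcongr
    · rw [min_eq_right hxy]
      refine le_trans (Real.log_le_log ?_ ?_) k2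
      · exact add_pos_of_pos_of_nonneg one_pos (div_nonneg hL0 hδy.le)
      · gcongr
  · refine Real.log_le_log ?_ ?_
    · exact add_pos_of_pos_of_nonneg one_pos (div_nonneg dist_nonneg hmpos.le)
    · gcongr
end

section
/- In the unit disk, the diameter of the j-sphere of radius M centered at 0 equals log(2e^M − 1), which is strictly less than 2M for every M > 0. -/
/-- The distance ratio metric of the unit ball. -/
noncomputable def jBall {n : ℕ} (x y : EuclideanSpace ℝ (Fin n)) : ℝ :=
  Real.log (1 + dist x y / min (1 - ‖x‖) (1 - ‖y‖))

/-- In the unit ball, the diameter of the `j`-sphere of radius `M` centered at `0` equals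
`log(2e^M − 1)`: for `x` on the boundary of `B_j(0,M)` (i.e. `|x| = 1 − e^{−M}`) one has
`j(x,−x) = log(2e^M − 1)`, and this is strictly less than `2M` for every `M > 0`. -/
theorem stmt19 (n : ℕ) (M : ℝ) (hM : 0 < M)
    (x : EuclideanSpace ℝ (Fin n)) (hx : ‖x‖ = 1 - Real.exp (-M)) :
    jBall x (-x) = Real.log (2 * Real.exp M - 1) ∧
    Real.log (2 * Real.exp M - 1) < 2 * M := by
  have hepos : (0:ℝ) < Real.exp (-M) := Real.exp_pos _
  have hd : dist x (-x) = 2 * ‖x‖ := by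
    rw [dist_eq_norm, sub_neg_eq_add]
    rw [show x + x = (2:ℝ) • x by module, norm_smul]
    simp
  constructor
  · unfold jBall
    rw [hd, norm_neg, hx, min_self]
    congr 1
    have : 1 - (1 - Real.exp (-M)) = Real.exp (-M) := by ring
    rw [this]
    field_simp
    rw [Real.exp_neg]
    have he : (0:ℝ) < Real.exp M := Real.exp_pos _
    field_simp
    ring
  · have h1 : 2 * Real.exp M - 1 < Real.exp (2 * M) := by
      have hgt : 1 < Real.exp M := by linarith [Real.add_one_le_exp M]
      have : (Real.exp M - 1)^2 > 0 := by nlinarith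
      have h2 : Real.exp (2*M) = Real.exp M * Real.exp M := by
        rw [two_mul, Real.exp_add]
      nlinarith
    have h0 : (0:ℝ) < 2 * Real.exp M - 1 := by
      linarith [Real.add_one_le_exp M]
    calc Real.log (2 * Real.exp M - 1) < Real.log (Real.exp (2*M)) :=
          Real.log_lt_log h0 h1
      _ = 2 * M := Real.log_exp _
end
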